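/- In a commutative unitary ring with only finitely many ideals that is not a field, there exists a nonzero element x such that the annihilator Ann(x) = {r ∈ R : rx = 0} is a prime ideal. -/

import Mathlib

theorem exists_elem_with_prime_annihilator (R : Type*) [CommRing R] [Nontrivial R]
    [Finite (Ideal R)] (hR : ¬ IsField R) :
    ∃ x : R, x ≠ 0 ∧ (Ideal.span {x} : Ideal R).annihilator.IsPrime := by
  have hN : IsNoetherianRing R := by
    rw [isNoetherianRing_iff, isNoetherian_iff]
    exact Finite.wellFounded_of_trans_of_irrefl _
  obtain ⟨P, hP0, -⟩ :=
    exists_le_isAssociatedPrime_of_isNoetherianRing R (1 : R) one_ne_zero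
  obtain ⟨hP, y, rfl⟩ := isAssociatedPrime_iff.mp hP0
  rw [Submodule.bot_colon'] at hP
  refine ⟨y, ?_, hP⟩
  rintro rfl
  exact hP.ne_top (by rw [Submodule.annihilator_eq_top_iff, Submodule.span_singleton_eq_bot])
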